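/- Let n be an odd natural number with n ≥ 3. Then every connected finite simple graph G on n vertices whose adjacency matrix over ℝ is invertible has at least n edges, and there exists a connected simple graph on n vertices with exactly n edges whose adjacency matrix over ℝ is invertible (the cycle C_n, since n is odd). -/

import Mathlib

attribute [local instance] Classical.propDecidable

section AuxForMinEdges

open SimpleGraph Finset Matrix
open scoped Fin.CommRing Fin.NatCast

lemma myLemA {n : ℕ} (hn : 1 ≤ n) (G : SimpleGraph (Fin n)) [Fintype G.edgeSet] (hG : G.Connected) :
    n - 1 ≤ G.edgeFinset.card := by
  classical
  have : NeZero n := ⟨by omega⟩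
  have key : ∀ v : Fin n, v ≠ 0 → ∃ x, G.Adj v x ∧ G.dist x 0 < G.dist v 0 := by
    intro v hv
    obtain ⟨p, hp⟩ := (hG v 0).exists_walk_length_eq_dist
    cases p with
    | nil => exact absurd rfl hv
    | cons h q =>
      refine ⟨_, h, ?_⟩
      calc G.dist _ 0 ≤ q.length := G.dist_le q
      _ < q.length + 1 := Nat.lt_succ_self _
      _ = G.dist v 0 := by simpa using hp
  choose x hadj hdist using key
  have hcard : (Finset.univ.erase (0 : Fin n)).card = n - 1 := by
    rw [Finset.card_erase_of_mem (Finset.mem_univ _), Finset.card_univ, Fintype.card_fin]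
  rw [← hcard]
  apply Finset.card_le_card_of_injOn
      (fun v => if h : v = 0 then s(0,0) else s(v, x v h))
  · intro v hv
    have hv0 : v ≠ 0 := Finset.ne_of_mem_erase hv
    simp only [dif_neg hv0, Finset.mem_coe, SimpleGraph.mem_edgeFinset,
      SimpleGraph.mem_edgeSet]
    exact hadj v hv0
  · intro a ha b hb hab
    have ha0 : a ≠ 0 := Finset.ne_of_mem_erase ha
    have hb0 : b ≠ 0 := Finset.ne_of_mem_erase hb
    simp only [dif_neg ha0, dif_neg hb0, Sym2.eq_iff] at hab
    rcases hab with ⟨h1, _⟩ | ⟨h1, h2⟩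
    · exact h1
    · exfalso
      have d1 := hdist a ha0
      have d2 := hdist b hb0
      rw [h2] at d1
      rw [← h1] at d2
      omega

lemma myLemB {n : ℕ} (hn : 3 ≤ n) (G : SimpleGraph (Fin n)) [Fintype G.edgeSet] (hG : G.Connected)
    (hac : ¬ G.IsAcyclic) : n ≤ G.edgeFinset.card := by
  classical
  have : NeZero n := ⟨by omega⟩
  rw [SimpleGraph.IsAcyclic] at hac
  push_neg at hac
  obtain ⟨u, c, hc⟩ := hac
  cases c with
  | nil => exact absurd hc (by simp [SimpleGraph.Walk.isCycle_def])
  | @cons _ w _ hvw q =>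
    have hmemc : s(u, w) ∈ (SimpleGraph.Walk.cons hvw q).edges := by simp
    have hreach : (G \ SimpleGraph.fromEdgeSet {s(u, w)}).Reachable u w :=
      (SimpleGraph.adj_and_reachable_delete_edges_iff_exists_cycle.mpr
        ⟨u, SimpleGraph.Walk.cons hvw q, hc, hmemc⟩).2
    set G' := G \ SimpleGraph.fromEdgeSet {s(u, w)} with hG'def
    have hadj' : ∀ a b, G.Adj a b → G'.Reachable a b := by
      intro a b hab
      by_cases he : s(a, b) = s(u, w)
      · rw [Sym2.eq_iff] at he
        rcases he with ⟨rfl, rfl⟩ | ⟨rfl, rfl⟩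
        · exact hreach
        · exact hreach.symm
      · refine SimpleGraph.Adj.reachable ?_
        rw [hG'def, SimpleGraph.sdiff_adj, SimpleGraph.fromEdgeSet_adj]
        exact ⟨hab, fun h => he h.1⟩
    have hG'conn : G'.Connected := by
      rw [SimpleGraph.connected_iff]
      refine ⟨fun a b => ?_, ⟨0⟩⟩
      obtain ⟨p⟩ := hG a b
      induction p with
      | nil => exact SimpleGraph.Reachable.refl _
      | cons h q ih => exact (hadj' _ _ h).trans ih
    have hedge : G'.edgeFinset = G.edgeFinset.erase s(u, w) := by
      ext e
      rw [Finset.mem_erase, SimpleGraph.mem_edgeFinset, SimpleGraph.mem_edgeFinset, hG'def,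
        SimpleGraph.edgeSet_sdiff, SimpleGraph.edgeSet_fromEdgeSet]
      constructor
      · rintro ⟨h1, h2⟩
        refine ⟨?_, h1⟩
        intro h
        exact h2 ⟨h, by simp [h, Sym2.isDiag_iff_proj_eq, hvw.ne]⟩
      · rintro ⟨h1, h2⟩
        exact ⟨h2, fun h => h1 h.1⟩
    have hmem : s(u, w) ∈ G.edgeFinset := by
      rw [SimpleGraph.mem_edgeFinset]; exact hvw
    have h1 := myLemA (by omega) G' hG'conn
    rw [hedge, Finset.card_erase_of_mem hmem] at h1
    have h2 : 1 ≤ G.edgeFinset.card := Finset.card_pos.2 ⟨_, hmem⟩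
    omega

lemma myLemC {n : ℕ} (hodd : Odd n) (G : SimpleGraph (Fin n)) (hT : G.IsTree) :
    ¬ IsUnit (G.adjMatrix ℝ) := by
  classical
  have hn0 : n ≠ 0 := by rintro rfl; simp [Nat.odd_iff] at hodd
  have : NeZero n := ⟨hn0⟩
  have hup := hT.existsUnique_path
  set p : (v : Fin n) → G.Walk v 0 := fun v => (hup v 0).choose with hpdef
  have hp : ∀ v, (p v).IsPath := fun v => (hup v 0).choose_spec.1
  have hpu : ∀ v (q : G.Walk v 0), q.IsPath → q = p v := fun v q hq =>
    ((hup v 0).choose_spec.2 q hq)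
  have hstep : ∀ u v, G.Adj u v → (p u).length % 2 ≠ (p v).length % 2 := by
    intro u v huv
    have key : (p u).length = (p v).length + 1 ∨ (p v).length = (p u).length + 1 := by
      by_cases h : u ∈ (p v).support
      · right
        have hd : ((p v).dropUntil u h) = p u := hpu u _ ((hp v).dropUntil h)
        have hto : ((p v).takeUntil u h) = ↑(SimpleGraph.Path.singleton huv.symm) := by
          obtain ⟨q0, hq0, huniq⟩ := hup v u
          rw [huniq _ ((hp v).takeUntil h), huniq _ (SimpleGraph.Path.singleton huv.symm).2]
        have hlen := congrArg SimpleGraph.Walk.length ((p v).take_spec h)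
        rw [SimpleGraph.Walk.length_append, hd, hto] at hlen
        simp only [SimpleGraph.Path.singleton, SimpleGraph.Walk.length_cons,
          SimpleGraph.Walk.length_nil] at hlen
        omega
      · left
        have hcons : (SimpleGraph.Walk.cons huv (p v)).IsPath := (hp v).cons h
        rw [← hpu u _ hcons]
        simp
    rcases key with h | h <;> omega
  intro hU
  have hdet : Matrix.det (G.adjMatrix ℝ) = 0 := by
    rw [Matrix.det_apply]
    apply Finset.sum_eq_zero
    intro σ _
    by_cases hσ : ∀ i, G.Adj (σ i) i
    · exfalso
      set c : Fin n → ℕ := fun v => (p v).length % 2 with hc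
      have hflip : ∀ i, c (σ i) ≠ c i := fun i => hstep _ _ (hσ i)
      set S := Finset.univ.filter (fun v => c v = 0) with hS
      set T := Finset.univ.filter (fun v => ¬ c v = 0) with hT'
      have hST : ∀ i ∈ S, σ i ∈ T := by
        intro i hi
        simp only [hS, Finset.mem_filter, Finset.mem_univ, true_and] at hi
        simp only [hT', Finset.mem_filter, Finset.mem_univ, true_and]
        exact fun h => hflip i (h.trans hi.symm)
      have hTS : ∀ i ∈ T, σ i ∈ S := by
        intro i hi
        simp only [hT', Finset.mem_filter, Finset.mem_univ, true_and] at hi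
        simp only [hS, Finset.mem_filter, Finset.mem_univ, true_and]
        have hc2 : ∀ v, c v = 0 ∨ c v = 1 := fun v => by
          simp only [hc]; exact Nat.mod_two_eq_zero_or_one _
        have := hflip i
        have h1 := hc2 i
        have h2 := hc2 (σ i)
        omega
      have h1 : S.card ≤ T.card :=
        Finset.card_le_card_of_injOn σ hST (σ.injective.injOn)
      have h2 : T.card ≤ S.card :=
        Finset.card_le_card_of_injOn σ hTS (σ.injective.injOn)
      have hsum : S.card + T.card = n := by
        rw [hS, hT', Finset.card_filter_add_card_filter_not, Finset.card_univ,
          Fintype.card_fin]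
      rw [Nat.odd_iff] at hodd
      omega
    · push_neg at hσ
      obtain ⟨i, hi⟩ := hσ
      have hzero : ∏ i, (G.adjMatrix ℝ) (σ i) i = 0 :=
        Finset.prod_eq_zero (Finset.mem_univ i) (by simp [hi])
      rw [hzero, smul_zero]
  have := (Matrix.isUnit_iff_isUnit_det _).1 hU
  rw [hdet] at this
  simp at this

lemma two_ne_zero_fin {n : ℕ} [NeZero n] (hn : 3 ≤ n) : ((1 : Fin n) + 1) ≠ 0 := by
  intro h
  have hv : (1 % n + 1 % n) % n = 0 := by
    simpa [Fin.add_def, Fin.val_one'] using congrArg Fin.val h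
  rw [Nat.mod_eq_of_lt (show 1 < n by omega)] at hv
  rw [Nat.mod_eq_of_lt (show 1 + 1 < n by omega)] at hv
  omega

lemma cycle_adj {n : ℕ} [NeZero n] (hn : 3 ≤ n) (u v : Fin n) :
    (SimpleGraph.cycleGraph n).Adj u v ↔ (u = v + 1 ∨ v = u + 1) := by
  rw [SimpleGraph.cycleGraph_adj']
  have hval : ∀ a b : Fin n, (a - b).val = 1 ↔ a = b + 1 := by
    intro a b
    constructor
    · intro h
      have : a - b = 1 := by
        apply Fin.ext
        rw [h, Fin.val_one']
        exact (Nat.mod_eq_of_lt (by omega)).symm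
      rw [sub_eq_iff_eq_add] at this
      rw [this, add_comm]
    · intro h
      rw [h]
      have : b + 1 - b = 1 := by ring
      rw [this, Fin.val_one']
      exact Nat.mod_eq_of_lt (by omega)
  rw [hval, hval]

lemma cycle_card {n : ℕ} [NeZero n] (hn : 3 ≤ n)
    [instF : Fintype (SimpleGraph.cycleGraph n).edgeSet] :
    (SimpleGraph.cycleGraph n).edgeFinset.card = n := by
  classical
  have himg : (SimpleGraph.cycleGraph n).edgeFinset
      = Finset.image (fun i : Fin n => s(i, i + 1)) Finset.univ := by
    ext e
    induction e with
    | _ u v =>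
      simp only [SimpleGraph.mem_edgeFinset, SimpleGraph.mem_edgeSet, Finset.mem_image,
        Finset.mem_univ, true_and]
      rw [cycle_adj hn]
      constructor
      · rintro (h | h)
        · exact ⟨v, by rw [h]; exact Sym2.eq_swap⟩
        · exact ⟨u, by rw [h]⟩
      · rintro ⟨i, hi⟩
        rw [Sym2.eq_iff] at hi
        rcases hi with ⟨rfl, rfl⟩ | ⟨rfl, rfl⟩
        · right; rfl
        · left; rfl
  rw [himg, Finset.card_image_of_injective _ ?_, Finset.card_univ, Fintype.card_fin]
  intro a b hab
  rw [Sym2.eq_iff] at hab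
  rcases hab with ⟨h1, _⟩ | ⟨h1, h2⟩
  · exact h1
  · exfalso
    apply two_ne_zero_fin hn
    have : a = a + (1 + 1) := by
      conv_lhs => rw [h1, ← h2]
      ring
    exact (left_eq_add.mp this)

lemma cycle_unit {n : ℕ} [NeZero n] (hn : 3 ≤ n) (hodd : Odd n)
    [instD : DecidableRel (SimpleGraph.cycleGraph n).Adj] :
    IsUnit ((SimpleGraph.cycleGraph n).adjMatrix ℝ) := by
  classical
  set P : Matrix (Fin n) (Fin n) ℝ := Matrix.of (fun i j => if i = j + 1 then (1 : ℝ) else 0)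
    with hP
  -- powers of P
  have hPk : ∀ (k : ℕ) (i j : Fin n), (P ^ k) i j = if i = j + (k : Fin n) then 1 else 0 := by
    intro k
    induction k with
    | zero =>
      intro i j
      simp [Matrix.one_apply]
    | succ k ih =>
      intro i j
      rw [pow_succ, Matrix.mul_apply]
      have hterm : ∀ m : Fin n, (P ^ k) i m * P m j
          = if m = j + 1 then (if i = j + 1 + (k : Fin n) then 1 else 0) else 0 := by
        intro m
        rw [ih]
        by_cases hm : m = j + 1
        · subst hm; simp [hP]
        · simp [hP, hm]
      rw [Finset.sum_congr rfl (fun m _ => hterm m), Finset.sum_ite_eq' Finset.univ (j + 1)]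
      simp only [Finset.mem_univ, if_true]
      have : j + 1 + (k : Fin n) = j + ((k : ℕ) + 1 : ℕ) := by push_cast; ring
      rw [this]
  have hPn : P ^ n = 1 := by
    ext i j
    rw [hPk]
    simp [Matrix.one_apply]
  have hPPt : P * Pᵀ = 1 := by
    ext i j
    rw [Matrix.mul_apply]
    have hterm : ∀ k : Fin n, P i k * Pᵀ k j
        = if k = i - 1 then (if j = i then (1:ℝ) else 0) else 0 := by
      intro k
      simp only [Matrix.transpose_apply, hP, Matrix.of_apply]
      by_cases hk : k = i - 1
      · subst hk
        have hsub : i - 1 + 1 = i := by ring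
        rw [hsub]
        simp
      · have hik : i ≠ k + 1 := fun h => hk (by rw [h]; ring)
        simp [hik, hk]
    rw [Finset.sum_congr rfl (fun k _ => hterm k), Finset.sum_ite_eq' Finset.univ (i - 1)]
    simp only [Finset.mem_univ, if_true, Matrix.one_apply]
    by_cases h : i = j <;> simp [h, eq_comm]
  have hPtP : Pᵀ * P = 1 := by
    ext i j
    rw [Matrix.mul_apply]
    have hterm : ∀ k : Fin n, Pᵀ i k * P k j
        = if k = i + 1 then (if i = j then (1 : ℝ) else 0) else 0 := by
      intro k
      simp only [Matrix.transpose_apply, hP, Matrix.of_apply]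
      by_cases hk : k = i + 1
      · subst hk
        simp
      · simp [hk]
    rw [Finset.sum_congr rfl (fun k _ => hterm k), Finset.sum_ite_eq' Finset.univ (i + 1)]
    simp [Matrix.one_apply]
  have hPtunit : IsUnit Pᵀ := isUnit_iff_exists.2 ⟨P, hPtP, hPPt⟩
  have hQn : (P * P) ^ n = 1 := by
    rw [← sq, ← pow_mul, mul_comm 2 n, pow_mul, hPn, one_pow]
  set S : Matrix (Fin n) (Fin n) ℝ := ∑ i ∈ Finset.range n, (-(P * P)) ^ i with hS
  have h1 : S * (P * P + 1) = 1 + 1 := by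
    have hg := geom_sum_mul (-(P * P)) n
    rw [Odd.neg_pow hodd, hQn] at hg
    have h2 : S * (P * P + 1) = -(S * (-(P * P) - 1)) := by noncomm_ring
    rw [h2, hg]
    noncomm_ring
  have h1' : (P * P + 1) * S = 1 + 1 := by
    have hg := mul_geom_sum (-(P * P)) n
    rw [Odd.neg_pow hodd, hQn] at hg
    have h2 : (P * P + 1) * S = -((-(P * P) - 1) * S) := by noncomm_ring
    rw [h2, hg]
    noncomm_ring
  have hQunit : IsUnit (P * P + 1) := by
    refine isUnit_iff_exists.2 ⟨((2 : ℝ)⁻¹) • S, ?_, ?_⟩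
    · rw [Matrix.mul_smul, h1', smul_add, ← add_smul]
      norm_num
    · rw [Matrix.smul_mul, h1, smul_add, ← add_smul]
      norm_num
  have hA : (SimpleGraph.cycleGraph n).adjMatrix ℝ = Pᵀ * (P * P + 1) := by
    have hexp : Pᵀ * (P * P + 1) = P + Pᵀ := by
      rw [mul_add, mul_one, ← mul_assoc, hPtP, one_mul]
    rw [hexp]
    ext i j
    rw [Matrix.add_apply, SimpleGraph.adjMatrix_apply]
    simp only [hP, Matrix.of_apply, Matrix.transpose_apply]
    have hne2 : ∀ a : Fin n, ¬ a = a + 1 + 1 := by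
      intro a h
      rw [add_assoc] at h
      exact two_ne_zero_fin hn (left_eq_add.mp h)
    by_cases h1 : i = j + 1 <;> by_cases h2 : j = i + 1
    · exfalso
      apply two_ne_zero_fin hn
      have h3 : i = i + (1 + 1) := by
        conv_lhs => rw [h1, h2]
        rw [add_assoc]
      exact left_eq_add.mp h3
    · simp [cycle_adj hn, h1, h2, hne2 i, hne2 j]
    · simp [cycle_adj hn, h1, h2, hne2 i, hne2 j]
    · simp [cycle_adj hn, h1, h2, hne2 i, hne2 j]
  rw [hA]
  exact hPtunit.mul hQunit

end AuxForMinEdges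

/-- For odd `n ≥ 3`: every connected simple graph on `n` vertices with invertible (real)
adjacency matrix has at least `n` edges, and some connected simple graph on `n` vertices
with exactly `n` edges has invertible adjacency matrix. -/
theorem min_edges_connected_nonsingular_odd (n : ℕ) (hn : 3 ≤ n) (hodd : Odd n) :
    (∀ G : SimpleGraph (Fin n), G.Connected → IsUnit (G.adjMatrix ℝ) →
      n ≤ G.edgeFinset.card) ∧
    (∃ G : SimpleGraph (Fin n), G.Connected ∧ G.edgeFinset.card = n ∧
      IsUnit (G.adjMatrix ℝ)) := by
  haveI : NeZero n := ⟨by omega⟩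
  constructor
  · intro G hG hU
    by_cases hac : G.IsAcyclic
    · exact absurd hU (myLemC hodd G ⟨hG, hac⟩)
    · exact myLemB hn G hG hac
  · refine ⟨SimpleGraph.cycleGraph n, ?_, ?_, ?_⟩
    · obtain ⟨m, rfl⟩ : ∃ m, n = m + 1 := ⟨n - 1, by omega⟩
      exact SimpleGraph.cycleGraph_connected
    · exact cycle_card (instF := @SimpleGraph.fintypeEdgeSet (Fin n) (SimpleGraph.cycleGraph n)
        Sym2.instFintype (fun a b => Classical.propDecidable _)) hn
    · exact cycle_unit (instD := fun a b => Classical.propDecidable _) hn hodd
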